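/- If T : ℝⁿ → ℝⁿ is β-cocoercive and Ψ ∈ ℝ^{n×n} is symmetric positive definite, then Ψ⁻¹T is (βτ)-cocoercive with respect to the Ψ-induced inner product ⟨x, y⟩_Ψ = ⟨Ψx, y⟩, where τ = 1/‖Ψ⁻¹‖. -/
import Mathlib

open scoped RealInnerProductSpace
open Matrix

/-- If T is β-cocoercive and Ψ is symmetric positive definite, then Ψ⁻¹T is
    (βτ)-cocoercive with respect to the Ψ-induced inner product
    ⟨x, y⟩_Ψ = ⟨Ψx, y⟩, where τ = 1/‖Ψ⁻¹‖. -/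
theorem preconditioned_cocoercive {n : ℕ}
    (T : EuclideanSpace ℝ (Fin n) → EuclideanSpace ℝ (Fin n)) (β : ℝ) (hβ : 0 < β)
    (hT : ∀ x y, ⟪T x - T y, x - y⟫ ≥ β * ‖T x - T y‖ ^ 2)
    (Ψ : Matrix (Fin n) (Fin n) ℝ) (hΨsymm : Ψ.IsSymm) (hΨpd : Ψ.PosDef) :
    let τ : ℝ := 1 / ‖Matrix.toEuclideanCLM (𝕜 := ℝ) Ψ⁻¹‖
    let S : EuclideanSpace ℝ (Fin n) → EuclideanSpace ℝ (Fin n) :=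
      fun x => Matrix.toEuclideanCLM (𝕜 := ℝ) Ψ⁻¹ (T x)
    ∀ x y, ⟪Matrix.toEuclideanCLM (𝕜 := ℝ) Ψ (S x - S y), x - y⟫ ≥
      β * τ * ⟪Matrix.toEuclideanCLM (𝕜 := ℝ) Ψ (S x - S y), S x - S y⟫ := by
  intro τ S x y
  set A := Matrix.toEuclideanCLM (𝕜 := ℝ) Ψ with hA
  set B := Matrix.toEuclideanCLM (𝕜 := ℝ) Ψ⁻¹ with hB
  set u : EuclideanSpace ℝ (Fin n) := T x - T y with hu
  have hSB : S x - S y = B u := (map_sub B _ _).symm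
  have hdet : IsUnit Ψ.det := isUnit_iff_ne_zero.mpr hΨpd.det_pos.ne'
  have hmul : Ψ * Ψ⁻¹ = 1 := Matrix.mul_nonsing_inv Ψ hdet
  have hABv : ∀ v : EuclideanSpace ℝ (Fin n), A (B v) = v := by
    intro v
    have h1 : A * B = 1 := by
      rw [hA, hB, ← _root_.map_mul, hmul, _root_.map_one]
    have h2 : (A * B) v = (1 : (EuclideanSpace ℝ (Fin n)) →L[ℝ] (EuclideanSpace ℝ (Fin n))) v := by
      rw [h1]
    simpa using h2
  have hAS : A (S x - S y) = u := by rw [hSB, hABv]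
  rw [hAS, hSB]
  have h1 : ⟪u, x - y⟫ ≥ β * ‖u‖ ^ 2 := hT x y
  have h2 : ⟪u, B u⟫ ≤ ‖u‖ * ‖B u‖ := real_inner_le_norm u (B u)
  have h3 : ‖B u‖ ≤ ‖B‖ * ‖u‖ := B.le_opNorm u
  have hτdef : τ = 1 / ‖B‖ := rfl
  have hB0 : (0:ℝ) ≤ ‖B‖ := norm_nonneg _
  have hu0 : (0:ℝ) ≤ ‖u‖ := norm_nonneg _
  have hτ : τ * ‖B‖ ≤ 1 := by
    rw [hτdef]
    rcases eq_or_ne ‖B‖ 0 with h | h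
    · rw [h]; norm_num
    · rw [one_div, inv_mul_cancel₀ h]
  have hτ0 : 0 ≤ τ := by rw [hτdef]; positivity
  have key : β * τ * ⟪u, B u⟫ ≤ β * ‖u‖ ^ 2 := by
    calc β * τ * ⟪u, B u⟫ ≤ β * τ * (‖u‖ * ‖B u‖) :=
          mul_le_mul_of_nonneg_left h2 (mul_nonneg hβ.le hτ0)
      _ ≤ β * τ * (‖u‖ * (‖B‖ * ‖u‖)) :=
          mul_le_mul_of_nonneg_left
            (mul_le_mul_of_nonneg_left h3 hu0) (mul_nonneg hβ.le hτ0)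
      _ = (τ * ‖B‖) * (β * ‖u‖ ^ 2) := by ring
      _ ≤ 1 * (β * ‖u‖ ^ 2) :=
          mul_le_mul_of_nonneg_right hτ (mul_nonneg hβ.le (sq_nonneg _))
      _ = β * ‖u‖ ^ 2 := one_mul _
  linarith
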